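/- Let τ ∈ ℝ, δ > 0, and let q be a positive irrational real number. Then there exists τ' ∈ π·ℚ with |τ - τ'| < δ and sin(τ'·√(k² + q)) ≠ 0 for all positive integers k. -/

import Mathlib

lemma aux_sin_ne (q : ℝ) (hq : 0 < q) (hirr : Irrational q) (r : ℚ) (hr : (r : ℝ) ≠ 0)
    (k : ℕ) : Real.sin ((r : ℝ) * Real.pi * Real.sqrt ((k : ℝ) ^ 2 + q)) ≠ 0 := by
  intro h
  rw [Real.sin_eq_zero_iff] at h
  obtain ⟨n, hn⟩ := h
  have hπ := Real.pi_ne_zero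
  have hs : Real.sqrt ((k : ℝ) ^ 2 + q) = (n : ℝ) / (r : ℝ) := by
    have h2 : (n : ℝ) * Real.pi = ((r : ℝ) * Real.sqrt ((k : ℝ) ^ 2 + q)) * Real.pi :=
      hn.trans (by ring)
    have h3 := mul_right_cancel₀ hπ h2
    field_simp [hr]
    linarith [h3]
  have hpos : (0:ℝ) ≤ (k : ℝ) ^ 2 + q := by positivity
  have hsq : (k : ℝ) ^ 2 + q = (((n / r : ℚ)^2 : ℚ) : ℝ) := by
    rw [← Real.sq_sqrt hpos, hs]; push_cast; ring
  have hirr2 : Irrational ((k : ℝ) ^ 2 + q) := by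
    have := hirr.natCast_add (k ^ 2)
    push_cast at this
    exact this
  rw [hsq] at hirr2
  exact Rat.not_irrational _ hirr2

theorem stmt_9 (τ : ℝ) (δ : ℝ) (hδ : 0 < δ) (q : ℝ) (hq : 0 < q) (hirr : Irrational q) :
    ∃ τ' : ℝ, (∃ r : ℚ, τ' = (r : ℝ) * Real.pi) ∧ |τ - τ'| < δ ∧
      ∀ k : ℕ, 1 ≤ k → Real.sin (τ' * Real.sqrt ((k : ℝ) ^ 2 + q)) ≠ 0 := by
  have hπ := Real.pi_pos
  rcases le_or_gt 0 τ with hτ | hτ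
  · obtain ⟨r, hr1, hr2⟩ := exists_rat_btwn (show τ / Real.pi < (τ + δ) / Real.pi from
      (div_lt_div_iff_of_pos_right hπ).mpr (by linarith))
    have hrpos : (0:ℝ) < (r:ℝ) := lt_of_le_of_lt (div_nonneg hτ hπ.le) hr1
    refine ⟨(r:ℝ) * Real.pi, ⟨r, rfl⟩, ?_, fun k _ => aux_sin_ne q hq hirr r hrpos.ne' k⟩
    rw [abs_lt]
    rw [div_lt_iff₀ hπ] at hr1
    rw [lt_div_iff₀ hπ] at hr2
    constructor <;> nlinarith
  · obtain ⟨r, hr1, hr2⟩ := exists_rat_btwn (show (τ - δ) / Real.pi < τ / Real.pi from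
      (div_lt_div_iff_of_pos_right hπ).mpr (by linarith))
    have hrneg : (r:ℝ) < 0 := lt_of_lt_of_le hr2 (div_nonpos_of_nonpos_of_nonneg hτ.le hπ.le)
    refine ⟨(r:ℝ) * Real.pi, ⟨r, rfl⟩, ?_, fun k _ => aux_sin_ne q hq hirr r hrneg.ne k⟩
    rw [abs_lt]
    rw [div_lt_iff₀ hπ] at hr1
    rw [lt_div_iff₀ hπ] at hr2
    constructor <;> nlinarith
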